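/- The acute angle between one-dimensional subspaces satisfies the triangle inequality: for nonzero vectors x, y, u in an inner product space, |∠{x,u} − ∠{y,u}| ≤ ∠{x,y} ≤ ∠{x,u} + ∠{y,u}, where ∠{a,b} = arccos(|⟨a,b⟩|/(‖a‖‖b‖)). -/

import Mathlib

open scoped RealInnerProductSpace
open Submodule

noncomputable section

variable {H : Type*} [NormedAddCommGroup H] [InnerProductSpace ℝ H]

/-- The Rayleigh quotient of `x` with respect to `A`. -/
def rq (A : H →L[ℝ] H) (x : H) : ℝ := ⟪x, A x⟫ / ⟪x, x⟫

/-- The residual of `x` with respect to `A`. -/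
def res (A : H →L[ℝ] H) (x : H) : H := A x - rq A x • x

/-- The acute angle between two vectors. -/
def ang (x y : H) : ℝ := Real.arccos (|⟪x, y⟫| / (‖x‖ * ‖y‖))

lemma arccos_anti {s t : ℝ} (h : s ≤ t) : Real.arccos t ≤ Real.arccos s := by
  unfold Real.arccos
  have := Real.monotone_arcsin h
  linarith

/-- Key inequality for unit vectors. -/
lemma key (a b c : H) (ha : ‖a‖ = 1) (hb : ‖b‖ = 1) (hc : ‖c‖ = 1) :
    Real.arccos ⟪a, c⟫ ≤ Real.arccos ⟪a, b⟫ + Real.arccos ⟪b, c⟫ := by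
  set α := Real.arccos ⟪a, b⟫ with hα
  set β := Real.arccos ⟪b, c⟫ with hβ
  have hab1 : |⟪a, b⟫| ≤ 1 := by
    have := abs_real_inner_le_norm a b; rwa [ha, hb, one_mul] at this
  have hbc1 : |⟪b, c⟫| ≤ 1 := by
    have := abs_real_inner_le_norm b c; rwa [hb, hc, one_mul] at this
  have hcosα : Real.cos α = ⟪a, b⟫ :=
    Real.cos_arccos (neg_le_of_abs_le hab1) (le_of_abs_le hab1)
  have hcosβ : Real.cos β = ⟪b, c⟫ :=
    Real.cos_arccos (neg_le_of_abs_le hbc1) (le_of_abs_le hbc1)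
  have hsinα : Real.sin α = Real.sqrt (1 - ⟪a, b⟫ ^ 2) := Real.sin_arccos _
  have hsinβ : Real.sin β = Real.sqrt (1 - ⟪b, c⟫ ^ 2) := Real.sin_arccos _
  -- the crucial bound via Cauchy-Schwarz on the components orthogonal to b
  set a' := a - ⟪a, b⟫ • b with ha'
  set c' := c - ⟪c, b⟫ • b with hc'
  have hbb : ⟪b, b⟫ = (1 : ℝ) := by
    rw [real_inner_self_eq_norm_sq, hb]; norm_num
  have hinner : ⟪a', c'⟫ = ⟪a, c⟫ - ⟪a, b⟫ * ⟪b, c⟫ := by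
    simp only [ha', hc', inner_sub_sub_self, real_inner_smul_left, real_inner_smul_right,
      inner_sub_left, inner_sub_right]
    rw [real_inner_comm c b, real_inner_comm b a, hbb]
    ring
  have hna : ‖a'‖ ^ 2 = 1 - ⟪a, b⟫ ^ 2 := by
    rw [← real_inner_self_eq_norm_sq, ha']
    simp only [inner_sub_sub_self, real_inner_smul_left, real_inner_smul_right,
      inner_sub_left, inner_sub_right]
    rw [real_inner_comm b a, hbb, real_inner_self_eq_norm_sq, ha]
    ring
  have hnc : ‖c'‖ ^ 2 = 1 - ⟪b, c⟫ ^ 2 := by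
    rw [← real_inner_self_eq_norm_sq, hc']
    simp only [inner_sub_sub_self, real_inner_smul_left, real_inner_smul_right,
      inner_sub_left, inner_sub_right]
    rw [real_inner_comm c b, hbb, real_inner_self_eq_norm_sq, hc]
    ring
  have hnorma : ‖a'‖ = Real.sqrt (1 - ⟪a, b⟫ ^ 2) := by
    rw [← hna, Real.sqrt_sq (norm_nonneg _)]
  have hnormc : ‖c'‖ = Real.sqrt (1 - ⟪b, c⟫ ^ 2) := by
    rw [← hnc, Real.sqrt_sq (norm_nonneg _)]
  have hcs : -(‖a'‖ * ‖c'‖) ≤ ⟪a', c'⟫ := by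
    have := abs_real_inner_le_norm a' c'
    have := neg_abs_le ⟪a', c'⟫
    linarith
  have hkey : Real.cos (α + β) ≤ ⟪a, c⟫ := by
    rw [Real.cos_add, hcosα, hcosβ, hsinα, hsinβ]
    rw [hinner, hnorma, hnormc] at hcs
    linarith
  have h1 : Real.arccos ⟪a, c⟫ ≤ Real.arccos (Real.cos (α + β)) := arccos_anti hkey
  have hα0 : 0 ≤ α := Real.arccos_nonneg _
  have hβ0 : 0 ≤ β := Real.arccos_nonneg _
  rcases le_or_gt (α + β) Real.pi with h | h
  · rw [Real.arccos_cos (by linarith) h] at h1; exact h1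
  · exact le_trans (Real.arccos_le_pi _) h.le

/-- Triangle inequality for `arccos |⟪·,·⟫|` on unit vectors. -/
lemma key2 (a b c : H) (ha : ‖a‖ = 1) (hb : ‖b‖ = 1) (hc : ‖c‖ = 1) :
    Real.arccos |⟪a, c⟫| ≤ Real.arccos |⟪a, b⟫| + Real.arccos |⟪b, c⟫| := by
  set s : ℝ := if 0 ≤ ⟪a, b⟫ then 1 else -1 with hs
  set t : ℝ := if 0 ≤ ⟪b, c⟫ then 1 else -1 with ht
  have hs1 : |s| = 1 := by rw [hs]; split <;> norm_num
  have ht1 : |t| = 1 := by rw [ht]; split <;> norm_num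
  have hsa : ‖s • a‖ = 1 := by rw [norm_smul, Real.norm_eq_abs, hs1, one_mul, ha]
  have htc : ‖t • c‖ = 1 := by rw [norm_smul, Real.norm_eq_abs, ht1, one_mul, hc]
  have hab : ⟪s • a, b⟫ = |⟪a, b⟫| := by
    rw [real_inner_smul_left, hs]
    rcases le_or_gt 0 ⟪a, b⟫ with h | h
    · rw [if_pos h, one_mul, abs_of_nonneg h]
    · rw [if_neg (not_le.2 h), abs_of_neg h]; ring
  have hbc : ⟪b, t • c⟫ = |⟪b, c⟫| := by
    rw [real_inner_smul_right, ht]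
    rcases le_or_gt 0 ⟪b, c⟫ with h | h
    · rw [if_pos h, one_mul, abs_of_nonneg h]
    · rw [if_neg (not_le.2 h), abs_of_neg h]; ring
  have hac : |⟪s • a, t • c⟫| = |⟪a, c⟫| := by
    rw [real_inner_smul_left, real_inner_smul_right, abs_mul, abs_mul, hs1, ht1]
    ring_nf
  have h0 : Real.arccos |⟪a, c⟫| ≤ Real.arccos ⟪s • a, t • c⟫ := by
    rw [← hac]; exact arccos_anti (le_abs_self _)
  calc Real.arccos |⟪a, c⟫| ≤ Real.arccos ⟪s • a, t • c⟫ := h0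
    _ ≤ Real.arccos ⟪s • a, b⟫ + Real.arccos ⟪b, t • c⟫ := key _ _ _ hsa hb htc
    _ = Real.arccos |⟪a, b⟫| + Real.arccos |⟪b, c⟫| := by rw [hab, hbc]

lemma ang_comm (x y : H) : ang x y = ang y x := by
  unfold ang; rw [real_inner_comm, mul_comm]

lemma ang_norm (x : H) (hx : x ≠ 0) :
    ang x = ang (‖x‖⁻¹ • x) := by
  funext y
  unfold ang
  rw [real_inner_smul_left, norm_smul, abs_mul, Real.norm_eq_abs,
    abs_inv, abs_norm]
  have : ‖x‖ ≠ 0 := norm_ne_zero_iff.2 hx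
  congr 1
  field_simp

lemma ang_norm' (x y : H) (hy : y ≠ 0) :
    ang x y = ang x (‖y‖⁻¹ • y) := by
  rw [ang_comm, ang_norm y hy, ang_comm]

lemma ang_triangle (x y u : H) (hx : x ≠ 0) (hy : y ≠ 0) (hu : u ≠ 0) :
    ang x y ≤ ang x u + ang u y := by
  set x' := ‖x‖⁻¹ • x with hx'
  set y' := ‖y‖⁻¹ • y with hy'
  set u' := ‖u‖⁻¹ • u with hu'
  have nx : ‖x'‖ = 1 := by
    rw [hx', norm_smul, Real.norm_eq_abs, abs_inv, abs_norm,
      inv_mul_cancel₀ (norm_ne_zero_iff.2 hx)]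
  have ny : ‖y'‖ = 1 := by
    rw [hy', norm_smul, Real.norm_eq_abs, abs_inv, abs_norm,
      inv_mul_cancel₀ (norm_ne_zero_iff.2 hy)]
  have nu : ‖u'‖ = 1 := by
    rw [hu', norm_smul, Real.norm_eq_abs, abs_inv, abs_norm,
      inv_mul_cancel₀ (norm_ne_zero_iff.2 hu)]
  have e1 : ang x y = Real.arccos |⟪x', y'⟫| := by
    rw [ang_norm x hx, ang_norm' _ y hy]
    unfold ang; rw [nx, ny]; norm_num; rfl
  have e2 : ang x u = Real.arccos |⟪x', u'⟫| := by
    rw [ang_norm x hx, ang_norm' _ u hu]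
    unfold ang; rw [nx, nu]; norm_num; rfl
  have e3 : ang u y = Real.arccos |⟪u', y'⟫| := by
    rw [ang_norm u hu, ang_norm' _ y hy]
    unfold ang; rw [nu, ny]; norm_num; rfl
  rw [e1, e2, e3]
  exact key2 x' u' y' nx nu ny

/-- Triangle inequality for the acute angle between one-dimensional subspaces:
for nonzero `x, y, u`, `|∠{x,u} − ∠{y,u}| ≤ ∠{x,y} ≤ ∠{x,u} + ∠{y,u}`. -/
theorem stmt_12 (x y u : H) (hx : x ≠ 0) (hy : y ≠ 0) (hu : u ≠ 0) :
    |ang x u - ang y u| ≤ ang x y ∧ ang x y ≤ ang x u + ang y u := by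
  have h1 : ang x u ≤ ang x y + ang y u := ang_triangle x u y hx hu hy
  have h2 : ang y u ≤ ang y x + ang x u := ang_triangle y u x hy hu hx
  have h3 : ang x y ≤ ang x u + ang u y := ang_triangle x y u hx hy hu
  rw [ang_comm y x] at h2
  rw [ang_comm u y] at h3
  refine ⟨abs_sub_le_iff.2 ⟨by linarith, by linarith⟩, h3⟩
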